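/- arXiv:2002.05999 — 2 statements merged into one kernel-verified Lean document; each statement's English description precedes it below -/
import Mathlib

section
/- Consider the one-dimensional density p(δ) = (1/(√(2π)σ)) exp(−r²/2) · 1/(1 − tanh(μ+σr)²) · 1/ε where r satisfies ε·tanh(μ+σr) = δ. If |μ| ≤ κ_μ and κ_σ^lo ≤ σ ≤ κ_σ^up with κ_σ^lo > 0, then p(δ) ≤ (1/(4√(2π) κ_σ^lo ε)) · [2 exp(2(κ_σ^up)² + 2κ_μ) + 2] for all δ ∈ (−ε, ε). -/
open Real

/-- Boundedness of the tanh-transformed Gaussian density under parameter constraints: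
for any `r` (corresponding to a point `δ = ε·tanh(μ+σr) ∈ (−ε,ε)`), if `|μ| ≤ κμ` and
`κσlo ≤ σ ≤ κσup` with `κσlo > 0`, then
`(1/(√(2π)σ)) exp(−r²/2) · 1/(1 − tanh(μ+σr)²) · 1/ε
  ≤ (1/(4√(2π) κσlo ε)) · (2 exp(2 κσup² + 2 κμ) + 2)`. -/
theorem tanh_gaussian_density_bounded
    (ε κμ κσlo κσup : ℝ) (hε : 0 < ε) (hκσlo : 0 < κσlo)
    (μ σ r : ℝ) (hμ : |μ| ≤ κμ) (hlo : κσlo ≤ σ) (hup : σ ≤ κσup) :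
    (1 / (Real.sqrt (2 * π) * σ)) * Real.exp (-r ^ 2 / 2) *
        (1 / (1 - Real.tanh (μ + σ * r) ^ 2)) * (1 / ε) ≤
      (1 / (4 * Real.sqrt (2 * π) * κσlo * ε)) *
        (2 * Real.exp (2 * κσup ^ 2 + 2 * κμ) + 2) := by
  have hσ : 0 < σ := hκσlo.trans_le hlo
  have hs : 0 < Real.sqrt (2 * π) := Real.sqrt_pos.2 (by positivity)
  set x := μ + σ * r with hx
  have hcosh : 0 < Real.cosh x := Real.cosh_pos x
  have htanh : 1 - Real.tanh x ^ 2 = 1 / Real.cosh x ^ 2 := by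
    have h := Real.cosh_sq_sub_sinh_sq x
    rw [Real.tanh_eq_sinh_div_cosh]
    field_simp
    exact h
  obtain ⟨hμ1, hμ2⟩ := abs_le.1 hμ
  have hkey : Real.exp (-r ^ 2 / 2) * Real.cosh x ^ 2 ≤
      (2 * Real.exp (2 * κσup ^ 2 + 2 * κμ) + 2) / 4 := by
    have hc : Real.cosh x = (Real.exp x + Real.exp (-x)) / 2 := Real.cosh_eq x
    have hexpand : Real.exp (-r ^ 2 / 2) * Real.cosh x ^ 2 =
        (Real.exp (-r ^ 2 / 2 + 2 * x) + 2 * Real.exp (-r ^ 2 / 2)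
          + Real.exp (-r ^ 2 / 2 + (-(2 * x)))) / 4 := by
      rw [hc]
      have e1 : Real.exp (-r ^ 2 / 2 + 2 * x) =
          Real.exp (-r ^ 2 / 2) * (Real.exp x * Real.exp x) := by
        rw [← Real.exp_add, ← Real.exp_add]; ring_nf
      have e2 : Real.exp (-r ^ 2 / 2 + (-(2 * x))) =
          Real.exp (-r ^ 2 / 2) * (Real.exp (-x) * Real.exp (-x)) := by
        rw [← Real.exp_add, ← Real.exp_add]; ring_nf
      have e3 : Real.exp x * Real.exp (-x) = 1 := by
        rw [← Real.exp_add]; simp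
      rw [e1, e2]; linear_combination (Real.exp (-r ^ 2 / 2) / 2) * e3
    rw [hexpand]
    have h1 : Real.exp (-r ^ 2 / 2 + 2 * x) ≤ Real.exp (2 * κσup ^ 2 + 2 * κμ) := by
      apply Real.exp_le_exp.2
      have : σ ^ 2 ≤ κσup ^ 2 := by nlinarith
      rw [hx]; nlinarith [sq_nonneg (r - 2 * σ)]
    have h2 : Real.exp (-r ^ 2 / 2 + (-(2 * x))) ≤ Real.exp (2 * κσup ^ 2 + 2 * κμ) := by
      apply Real.exp_le_exp.2
      have : σ ^ 2 ≤ κσup ^ 2 := by nlinarith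
      rw [hx]; nlinarith [sq_nonneg (r + 2 * σ)]
    have h3 : Real.exp (-r ^ 2 / 2) ≤ 1 := by
      apply Real.exp_le_one_iff.2; nlinarith [sq_nonneg r]
    linarith
  have hC : 0 < 2 * Real.exp (2 * κσup ^ 2 + 2 * κμ) + 2 := by positivity
  calc (1 / (Real.sqrt (2 * π) * σ)) * Real.exp (-r ^ 2 / 2) *
        (1 / (1 - Real.tanh x ^ 2)) * (1 / ε)
      = (Real.exp (-r ^ 2 / 2) * Real.cosh x ^ 2) / (Real.sqrt (2 * π) * σ * ε) := by
        rw [htanh]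
        rw [one_div_one_div]
        field_simp
    _ ≤ ((2 * Real.exp (2 * κσup ^ 2 + 2 * κμ) + 2) / 4) /
          (Real.sqrt (2 * π) * κσlo * ε) := by
        apply div_le_div₀ (by positivity) hkey (by positivity)
        exact mul_le_mul_of_nonneg_right
          (mul_le_mul_of_nonneg_left hlo hs.le) hε.le
    _ = (1 / (4 * Real.sqrt (2 * π) * κσlo * ε)) *
          (2 * Real.exp (2 * κσup ^ 2 + 2 * κμ) + 2) := by ring
end

section
/- For the one-dimensional family of densities p_{μ,σ} of δ = ε·tanh(μ + σr), r ∼ N(0,1), with parameters constrained to |μ| ≤ κ_μ and 0 < κ_σ^lo ≤ σ ≤ κ_σ^up, the derivative p'_{μ,σ}(δ) is uniformly bounded in δ ∈ (−ε, ε) by a constant depending only on ε, κ_μ, κ_σ^lo, κ_σ^up; hence the family {p_{μ,σ}} is uniformly Lipschitz and therefore equicontinuous. -/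
open Real Set

/-- The inverse hyperbolic tangent, as the inverse function of `Real.tanh`. -/
noncomputable def artanh (x : ℝ) : ℝ := Function.invFun Real.tanh x


lemma myTanhInj : Function.Injective Real.tanh := by
  intro a b h
  have ha := Real.cosh_pos a
  have hb := Real.cosh_pos b
  rw [Real.tanh_eq_sinh_div_cosh, Real.tanh_eq_sinh_div_cosh,
    div_eq_div_iff ha.ne' hb.ne'] at h
  have hz : Real.sinh (a - b) = 0 := by rw [Real.sinh_sub]; linarith
  have := Real.sinh_eq_zero.mp hz
  linarith

noncomputable def myL (x : ℝ) : ℝ := (Real.log (1 + x) - Real.log (1 - x)) / 2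

lemma myTanh_L {x : ℝ} (h1 : -1 < x) (h2 : x < 1) : Real.tanh (myL x) = x := by
  have h1' : (0:ℝ) < 1 + x := by linarith
  have h2' : (0:ℝ) < 1 - x := by linarith
  set y := myL x with hy
  have hE : 0 < Real.exp y := Real.exp_pos y
  have hE2 : Real.exp y ^ 2 = (1 + x) / (1 - x) := by
    rw [← Real.exp_nat_mul]
    show Real.exp (2 * ((Real.log (1+x) - Real.log (1-x))/2)) = _
    rw [mul_div_cancel₀ _ (two_ne_zero), Real.exp_sub, Real.exp_log h1', Real.exp_log h2']
  have hE2' : Real.exp y ^ 2 * (1 - x) = 1 + x := by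
    rw [hE2]; field_simp
  rw [Real.tanh_eq_sinh_div_cosh, Real.sinh_eq, Real.cosh_eq, Real.exp_neg]
  rw [div_eq_iff (by positivity)]
  have hEne : Real.exp y ≠ 0 := hE.ne'
  field_simp
  nlinarith [hE2']

lemma myArtanh_eq {x : ℝ} (h1 : -1 < x) (h2 : x < 1) : _root_.artanh x = myL x := by
  have h := myTanh_L h1 h2
  conv_lhs => rw [← h]
  exact Function.leftInverse_invFun myTanhInj _

lemma myHasDerivAt_L {x : ℝ} (h1 : -1 < x) (h2 : x < 1) :
    HasDerivAt myL (1 / (1 - x ^ 2)) x := by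
  have h1' : (0:ℝ) < 1 + x := by linarith
  have h2' : (0:ℝ) < 1 - x := by linarith
  have d1 : HasDerivAt (fun y : ℝ => Real.log (1 + y)) (1 / (1 + x)) x := by
    simpa [Function.comp_def] using (Real.hasDerivAt_log h1'.ne').comp x ((hasDerivAt_id x).const_add 1)
  have d2 : HasDerivAt (fun y : ℝ => Real.log (1 - y)) (-(1 / (1 - x))) x := by
    have : HasDerivAt (fun y : ℝ => 1 - y) (-1) x := by
      simpa using (hasDerivAt_id x).const_sub 1
    simpa [Function.comp_def] using (Real.hasDerivAt_log h2'.ne').comp x this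
  have := (d1.sub d2).div_const 2
  refine this.congr_deriv ?_
  have : 1 - x ^ 2 ≠ 0 := by nlinarith
  field_simp
  ring

lemma myHasDerivAt_q (ε μ σ : ℝ) (hε : 0 < ε) (hσ : 0 < σ) {δ : ℝ} (hδ : δ ∈ Ioo (-ε) ε) :
    HasDerivAt (fun y => (1 / (Real.sqrt (2 * π) * σ)) *
        Real.exp (-((myL (y / ε) - μ) / σ) ^ 2 / 2) * (ε / (ε ^ 2 - y ^ 2)))
      ((1 / (Real.sqrt (2 * π) * σ)) * Real.exp (-((myL (δ / ε) - μ) / σ) ^ 2 / 2) *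
        (ε / (ε ^ 2 - δ ^ 2)) ^ 2 * (2 * δ / ε - (myL (δ / ε) - μ) / σ ^ 2)) δ := by
  have hεne : ε ≠ 0 := hε.ne'
  have hx1 : -1 < δ / ε := by rw [lt_div_iff₀ hε]; linarith [hδ.1]
  have hx2 : δ / ε < 1 := by rw [div_lt_one hε]; exact hδ.2
  have hden : (0:ℝ) < ε ^ 2 - δ ^ 2 := by
    have := abs_lt.mpr ⟨hδ.1, hδ.2⟩
    nlinarith [hδ.1, hδ.2]
  have hxne : (1:ℝ) - (δ / ε) ^ 2 ≠ 0 := by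
    have : (1:ℝ) - (δ/ε)^2 = (ε^2 - δ^2)/ε^2 := by field_simp
    rw [this]; positivity
  have inner : HasDerivAt (fun y : ℝ => y / ε) (1 / ε) δ := by
    simpa using (hasDerivAt_id δ).div_const ε
  have hLc : HasDerivAt (fun y : ℝ => myL (y / ε)) (1 / (1 - (δ / ε) ^ 2) * (1 / ε)) δ :=
    by have := (myHasDerivAt_L hx1 hx2).comp δ inner; exact this
  have hg : HasDerivAt (fun y : ℝ => -((myL (y / ε) - μ) / σ) ^ 2 / 2)
      (-(2 * ((myL (δ / ε) - μ) / σ) ^ 1 * (1 / (1 - (δ / ε) ^ 2) * (1 / ε) / σ)) / 2) δ :=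
    ((((hLc.sub_const μ).div_const σ).pow 2).neg).div_const 2
  have hexp := hg.exp
  have hu : HasDerivAt (fun y : ℝ => ε ^ 2 - y ^ 2) (-(2 * δ ^ 1)) δ := by
    simpa using (hasDerivAt_pow 2 δ).const_sub (ε ^ 2)
  have hh : HasDerivAt (fun y : ℝ => ε / (ε ^ 2 - y ^ 2))
      ((0 * (ε ^ 2 - δ ^ 2) - ε * (-(2 * δ ^ 1))) / (ε ^ 2 - δ ^ 2) ^ 2) δ :=
    (hasDerivAt_const δ ε).div hu hden.ne'
  have := ((hexp.const_mul (1 / (Real.sqrt (2 * π) * σ))).mul hh)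
  refine this.congr_deriv ?_
  have hσne : σ ≠ 0 := hσ.ne'
  field_simp
  ring

set_option maxHeartbeats 1000000 in
lemma myBound (ε κμ κσlo κσup μ σ δ t : ℝ) (hε : 0 < ε) (hκσlo : 0 < κσlo)
    (hμ : |μ| ≤ κμ) (hσlo : κσlo ≤ σ) (hσup : σ ≤ κσup) (hδ : δ ∈ Ioo (-ε) ε)
    (htanh : Real.tanh t = δ / ε) :
    |(1 / (Real.sqrt (2 * π) * σ)) * Real.exp (-((t - μ) / σ) ^ 2 / 2) *
        (ε / (ε ^ 2 - δ ^ 2)) ^ 2 * (2 * δ / ε - (t - μ) / σ ^ 2)|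
      ≤ (1 / κσlo) * (1 / ε ^ 2) * (1 / κσlo ^ 2 + 2) *
        Real.exp (4 * κμ + 25 * κσup ^ 2 / 2) := by
  have hσ : 0 < σ := lt_of_lt_of_le hκσlo hσlo
  have hσup0 : 0 < κσup := hσ.trans_le hσup
  have hx1 : -1 < δ / ε := by rw [lt_div_iff₀ hε]; linarith [hδ.1]
  have hx2 : δ / ε < 1 := by rw [div_lt_one hε]; exact hδ.2
  have hden : (0:ℝ) < ε ^ 2 - δ ^ 2 := by nlinarith [hδ.1, hδ.2]
  obtain ⟨u, hu, hu0⟩ : ∃ u : ℝ, |t - μ| = u ∧ 0 ≤ u := ⟨|t - μ|, rfl, abs_nonneg _⟩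
  have hch : 0 < Real.cosh t := Real.cosh_pos t
  have hδeq : δ = ε * Real.tanh t := by rw [htanh]; field_simp
  have hden_eq : ε ^ 2 - δ ^ 2 = ε ^ 2 / Real.cosh t ^ 2 := by
    rw [hδeq, Real.tanh_eq_sinh_div_cosh]
    field_simp
    nlinarith [Real.cosh_sq_sub_sinh_sq t]
  have h_h : ε / (ε ^ 2 - δ ^ 2) = Real.cosh t ^ 2 / ε := by
    rw [hden_eq]; field_simp
  have hsqrt : (1:ℝ) ≤ Real.sqrt (2 * π) := by
    rw [show (1:ℝ) = Real.sqrt 1 from (Real.sqrt_one).symm]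
    exact Real.sqrt_le_sqrt (by nlinarith [Real.pi_gt_three])
  have hsqrt0 : 0 < Real.sqrt (2 * π) := lt_of_lt_of_le one_pos hsqrt
  have hA : 1 / (Real.sqrt (2 * π) * σ) ≤ 1 / κσlo := by
    apply one_div_le_one_div_of_le hκσlo
    nlinarith
  have hcosh_le : Real.cosh t ≤ Real.exp (κμ + u) := by
    have h1 : Real.cosh t ≤ Real.exp |t| := by
      rw [Real.cosh_eq]
      have := Real.exp_le_exp.mpr (le_abs_self t)
      have := Real.exp_le_exp.mpr (neg_le_abs t)
      linarith
    refine h1.trans (Real.exp_le_exp.mpr ?_)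
    have h2 : |t| ≤ |t - μ| + |μ| := by
      calc |t| = |(t - μ) + μ| := by ring_nf
      _ ≤ |t - μ| + |μ| := abs_add_le _ _
    rw [hu] at h2
    linarith
  have hexp_le : Real.exp (-((t - μ) / σ) ^ 2 / 2) ≤ Real.exp (-(u ^ 2 / (2 * κσup ^ 2))) := by
    apply Real.exp_le_exp.mpr
    have h2 : (t - μ) ^ 2 = u ^ 2 := by rw [← hu, sq_abs]
    have heq : -((t - μ) / σ) ^ 2 / 2 = -(u ^ 2 / (2 * σ ^ 2)) := by
      rw [div_pow, h2]; ring
    rw [heq, neg_le_neg_iff]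
    gcongr
  have hB : |2 * δ / ε - (t - μ) / σ ^ 2| ≤ (1 / κσlo ^ 2 + 2) * Real.exp u := by
    have hd1 : |2 * δ / ε| ≤ 2 := by
      rw [mul_div_assoc, abs_mul]
      have : |δ / ε| ≤ 1 := le_of_lt (abs_lt.mpr ⟨hx1, hx2⟩)
      rw [abs_two]
      nlinarith
    have hd2 : |(t - μ) / σ ^ 2| ≤ u * (1 / κσlo ^ 2) := by
      rw [abs_div, abs_of_pos (by positivity : (0:ℝ) < σ ^ 2), hu]
      rw [div_eq_mul_one_div]
      gcongr
    have hk : (0:ℝ) < 1 / κσlo ^ 2 := by positivity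
    calc |2 * δ / ε - (t - μ) / σ ^ 2| ≤ |2 * δ / ε| + |(t - μ) / σ ^ 2| := abs_sub _ _
      _ ≤ 2 + u * (1 / κσlo ^ 2) := by linarith
      _ ≤ (1 / κσlo ^ 2 + 2) * Real.exp u := by
          nlinarith [Real.add_one_le_exp u,
            mul_le_mul_of_nonneg_left (Real.add_one_le_exp u) hk.le]
  have hApos : 0 < 1 / (Real.sqrt (2 * π) * σ) := by positivity
  have hEpos : 0 < Real.exp (-((t - μ) / σ) ^ 2 / 2) := Real.exp_pos _
  have hHpos : 0 < ε / (ε ^ 2 - δ ^ 2) := div_pos hε hden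
  have habs : |(1 / (Real.sqrt (2 * π) * σ)) * Real.exp (-((t - μ) / σ) ^ 2 / 2) *
        (ε / (ε ^ 2 - δ ^ 2)) ^ 2 * (2 * δ / ε - (t - μ) / σ ^ 2)|
      = (1 / (Real.sqrt (2 * π) * σ)) * Real.exp (-((t - μ) / σ) ^ 2 / 2) *
        (ε / (ε ^ 2 - δ ^ 2)) ^ 2 * |2 * δ / ε - (t - μ) / σ ^ 2| := by
    rw [abs_mul]
    congr 1
    exact abs_of_pos (mul_pos (mul_pos hApos hEpos) (pow_pos hHpos 2))
  rw [habs, h_h]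
  have h2b : (0:ℝ) < 2 * κσup ^ 2 := by positivity
  calc (1 / (Real.sqrt (2 * π) * σ)) * Real.exp (-((t - μ) / σ) ^ 2 / 2) *
        (Real.cosh t ^ 2 / ε) ^ 2 * |2 * δ / ε - (t - μ) / σ ^ 2|
      ≤ (1 / κσlo) * Real.exp (-(u ^ 2 / (2 * κσup ^ 2))) *
        ((Real.exp (κμ + u)) ^ 2 / ε) ^ 2 * ((1 / κσlo ^ 2 + 2) * Real.exp u) := by
        gcongr
    _ = (1 / κσlo) * (1 / ε ^ 2) * (1 / κσlo ^ 2 + 2) *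
        Real.exp (-(u ^ 2 / (2 * κσup ^ 2)) + 4 * (κμ + u) + u) := by
        have h4 : Real.exp (4 * (κμ + u)) = (Real.exp (κμ + u) ^ 2) ^ 2 := by
          rw [← pow_mul, ← Real.exp_nat_mul]; norm_num
        have hsplit : Real.exp (-(u ^ 2 / (2 * κσup ^ 2)) + 4 * (κμ + u) + u)
            = Real.exp (-(u ^ 2 / (2 * κσup ^ 2))) * (Real.exp (κμ + u) ^ 2) ^ 2 *
              Real.exp u := by
          rw [← h4, ← Real.exp_add, ← Real.exp_add]
        rw [hsplit]
        field_simp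
    _ ≤ (1 / κσlo) * (1 / ε ^ 2) * (1 / κσlo ^ 2 + 2) *
        Real.exp (4 * κμ + 25 * κσup ^ 2 / 2) := by
        have hquad : 5 * u - 25 * κσup ^ 2 / 2 ≤ u ^ 2 / (2 * κσup ^ 2) := by
          rw [le_div_iff₀ h2b]
          nlinarith [sq_nonneg (u - 5 * κσup ^ 2)]
        apply mul_le_mul_of_nonneg_left _ (by positivity)
        exact Real.exp_le_exp.mpr (by linarith)


/-- For the family of densities `p_{μ,σ}` of `δ = ε·tanh(μ + σr)`, `r ∼ N(0,1)`, with
`|μ| ≤ κμ` and `0 < κσlo ≤ σ ≤ κσup`, the derivative `p'_{μ,σ}(δ)` is uniformly bounded on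
`(−ε, ε)` by a constant depending only on `ε, κμ, κσlo, κσup`; hence the family is uniformly
Lipschitz and therefore equicontinuous. -/
theorem tanh_gaussian_density_family_uniformly_lipschitz
    (ε κμ κσlo κσup : ℝ) (hε : 0 < ε) (hκσlo : 0 < κσlo) (hκ : κσlo ≤ κσup)
    (p : ℝ → ℝ → ℝ → ℝ)
    (hp : ∀ μ σ δ, p μ σ δ =
      (1 / (Real.sqrt (2 * π) * σ)) *
        Real.exp (-((_root_.artanh (δ / ε) - μ) / σ) ^ 2 / 2) * (ε / (ε ^ 2 - δ ^ 2))) :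
    ∃ C : ℝ, 0 ≤ C ∧
      (∀ μ σ, |μ| ≤ κμ → κσlo ≤ σ → σ ≤ κσup →
        (∀ δ ∈ Ioo (-ε) ε, |deriv (p μ σ) δ| ≤ C) ∧
        LipschitzOnWith (Real.toNNReal C) (p μ σ) (Ioo (-ε) ε)) := by
  set C : ℝ := (1 / κσlo) * (1 / ε ^ 2) * (1 / κσlo ^ 2 + 2) *
      Real.exp (4 * κμ + 25 * κσup ^ 2 / 2) with hC
  have hC0 : 0 ≤ C := by positivity
  refine ⟨C, hC0, ?_⟩
  intro μ σ hμ hσlo hσup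
  have hσ : 0 < σ := lt_of_lt_of_le hκσlo hσlo
  have hder : ∀ δ ∈ Ioo (-ε) ε, HasDerivAt (p μ σ)
      ((1 / (Real.sqrt (2 * π) * σ)) * Real.exp (-((myL (δ / ε) - μ) / σ) ^ 2 / 2) *
        (ε / (ε ^ 2 - δ ^ 2)) ^ 2 * (2 * δ / ε - (myL (δ / ε) - μ) / σ ^ 2)) δ := by
    intro δ hδ
    refine (myHasDerivAt_q ε μ σ hε hσ hδ).congr_of_eventuallyEq ?_
    filter_upwards [isOpen_Ioo.mem_nhds hδ] with y hy
    have hx1 : -1 < y / ε := by rw [lt_div_iff₀ hε]; linarith [hy.1]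
    have hx2 : y / ε < 1 := by rw [div_lt_one hε]; exact hy.2
    rw [hp, myArtanh_eq hx1 hx2]
  have hbound : ∀ δ ∈ Ioo (-ε) ε,
      |(1 / (Real.sqrt (2 * π) * σ)) * Real.exp (-((myL (δ / ε) - μ) / σ) ^ 2 / 2) *
        (ε / (ε ^ 2 - δ ^ 2)) ^ 2 * (2 * δ / ε - (myL (δ / ε) - μ) / σ ^ 2)| ≤ C := by
    intro δ hδ
    have hx1 : -1 < δ / ε := by rw [lt_div_iff₀ hε]; linarith [hδ.1]
    have hx2 : δ / ε < 1 := by rw [div_lt_one hε]; exact hδ.2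
    exact myBound ε κμ κσlo κσup μ σ δ _ hε hκσlo hμ hσlo hσup hδ (myTanh_L hx1 hx2)
  constructor
  · intro δ hδ
    rw [(hder δ hδ).deriv]
    exact hbound δ hδ
  · refine (convex_Ioo (-ε) ε).lipschitzOnWith_of_nnnorm_hasDerivWithin_le
      (f' := fun δ => (1 / (Real.sqrt (2 * π) * σ)) *
        Real.exp (-((myL (δ / ε) - μ) / σ) ^ 2 / 2) *
        (ε / (ε ^ 2 - δ ^ 2)) ^ 2 * (2 * δ / ε - (myL (δ / ε) - μ) / σ ^ 2))
      (fun δ hδ => (hder δ hδ).hasDerivWithinAt) ?_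
    intro δ hδ
    rw [← NNReal.coe_le_coe, Real.coe_toNNReal', coe_nnnorm, Real.norm_eq_abs]
    exact le_trans (hbound δ hδ) (le_max_left _ _)
end
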